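/- Vitali–Lebesgue theorem: let a < b and let f : ℝ → ℝ be bounded on [a,b]. Then f is Riemann integrable on [a,b] (i.e. there exists I ∈ ℝ which is its Riemann integral) if and only if the set of points x ∈ [a,b] at which f is not continuous within [a,b] (¬ ContinuousWithinAt f (Icc a b) x) has one-dimensional Lebesgue measure zero. -/

import Mathlib

open Set MeasureTheory

/-- `f` is Riemann integrable on `[a,b]` with integral `I`: for every `ε > 0` there is
`δ > 0` such that every tagged partition of `[a,b]` of mesh less than `δ` has Riemann
sum within `ε` of `I`. -/
def RiemannIntegralOn (f : ℝ → ℝ) (a b I : ℝ) : Prop :=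
  ∀ ε : ℝ, 0 < ε → ∃ δ : ℝ, 0 < δ ∧
    ∀ (N : ℕ) (x t : ℕ → ℝ),
      x 0 = a → x N = b →
      (∀ i < N, x i < x (i + 1)) →
      (∀ i < N, x (i + 1) - x i < δ) →
      (∀ i < N, t i ∈ Icc (x i) (x (i + 1))) →
      |(∑ i ∈ Finset.range N, f (t i) * (x (i + 1) - x i)) - I| < ε

lemma part_le {N : ℕ} {x : ℕ → ℝ} (hx : ∀ i < N, x i < x (i+1)) :
    ∀ {i j : ℕ}, i ≤ j → j ≤ N → x i ≤ x j := by
  intro i j hij hjN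
  induction j with
  | zero => interval_cases i; rfl
  | succ n ih =>
    rcases Nat.eq_or_lt_of_le hij with h | h
    · rw [h]
    · exact le_trans (ih (Nat.lt_succ_iff.mp h) (Nat.le_of_succ_le hjN))
        (le_of_lt (hx n (by omega)))

lemma part_cover {N : ℕ} {x : ℕ → ℝ} (hN : 0 < N) (hx : ∀ i < N, x i < x (i+1))
    {y : ℝ} (hy : x 0 ≤ y) (hyb : y < x N) :
    ∃ i < N, y ∈ Ico (x i) (x (i+1)) := by
  classical
  have hP : ∃ k, y < x (k+1) := ⟨N - 1, by rwa [Nat.sub_add_cancel hN]⟩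
  have hiP : y < x (Nat.find hP + 1) := Nat.find_spec hP
  have hiN : Nat.find hP < N := by
    by_contra h
    push_neg at h
    have := Nat.find_min hP (m := N - 1) (by omega)
    rw [Nat.sub_add_cancel hN] at this; exact this hyb
  refine ⟨Nat.find hP, hiN, ?_, hiP⟩
  rcases Nat.eq_zero_or_pos (Nat.find hP) with h0 | h0
  · rw [h0]; exact hy
  · have := Nat.find_min hP (m := Nat.find hP - 1) (by omega)
    push_neg at this
    rwa [Nat.sub_add_cancel h0] at this

lemma step_val {N : ℕ} (f : ℝ → ℝ) (x t : ℕ → ℝ) (hx : ∀ i < N, x i < x (i+1))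
    {y : ℝ} {i : ℕ} (hiN : i < N) (hyi : y ∈ Ico (x i) (x (i+1))) :
    (∑ j ∈ Finset.range N, Set.indicator (Ico (x j) (x (j+1))) (fun _ => f (t j)) y) = f (t i) := by
  rw [Finset.sum_eq_single_of_mem i (Finset.mem_range.2 hiN)]
  · exact Set.indicator_of_mem hyi _
  · intro j hj hne
    apply Set.indicator_of_notMem
    rcases lt_or_gt_of_ne hne with h | h
    · intro hyj
      have h1 : x (j+1) ≤ x i := part_le hx h (le_of_lt hiN)
      have := hyj.2; have := hyi.1; linarith
    · intro hyj
      have h1 : x (i+1) ≤ x j := part_le hx h (le_of_lt (Finset.mem_range.1 hj))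
      have := hyj.1; have := hyi.2; linarith

lemma step_integrable {N : ℕ} (f : ℝ → ℝ) (x t : ℕ → ℝ) :
    Integrable (fun y => ∑ j ∈ Finset.range N,
      Set.indicator (Ico (x j) (x (j+1))) (fun _ => f (t j)) y) := by
  apply integrable_finset_sum
  intro i hi
  exact (integrable_indicator_iff measurableSet_Ico).2
    (integrableOn_const (by simp [Real.volume_Ico]))

lemma step_integral {N : ℕ} (f : ℝ → ℝ) (x t : ℕ → ℝ) (hx : ∀ i < N, x i < x (i+1)) :
    ∫ y, (∑ j ∈ Finset.range N, Set.indicator (Ico (x j) (x (j+1))) (fun _ => f (t j)) y)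
      = ∑ i ∈ Finset.range N, f (t i) * (x (i+1) - x i) := by
  rw [MeasureTheory.integral_finset_sum]
  · refine Finset.sum_congr rfl fun i hi => ?_
    rw [MeasureTheory.integral_indicator_const _ measurableSet_Ico]
    have h0 : (0:ℝ) ≤ x (i+1) - x i := by
      have := hx i (Finset.mem_range.1 hi); linarith
    simp [Real.volume_Ico, ENNReal.toReal_ofReal h0, max_eq_left h0]
    ring
  · intro i hi
    exact (integrable_indicator_iff measurableSet_Ico).2
      (integrableOn_const (by simp [Real.volume_Ico]))

lemma step_pointwise {a b : ℝ} {f : ℝ → ℝ} {U : Set ℝ} {δ ε₁ : ℝ} (hε₁ : 0 ≤ ε₁)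
    (hδ : ∀ z ∈ Icc a b \ U, EMetric.diam (f '' (EMetric.ball z (ENNReal.ofReal δ) ∩ Icc a b))
        ≤ ENNReal.ofReal ε₁)
    {N : ℕ} {x t : ℕ → ℝ} (hx0 : x 0 = a) (hxN : x N = b)
    (hx : ∀ i < N, x i < x (i+1)) (hmesh : ∀ i < N, x (i+1) - x i < δ)
    (ht : ∀ i < N, t i ∈ Icc (x i) (x (i+1)))
    {y : ℝ} (hy : y ∈ Ico a b) (hyU : y ∉ U) :
    |(∑ j ∈ Finset.range N, Set.indicator (Ico (x j) (x (j+1))) (fun _ => f (t j)) y) - f y|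
      ≤ ε₁ := by
  have hN : 0 < N := by
    rcases Nat.eq_zero_or_pos N with h | h
    · exfalso; rw [h, hx0] at hxN; have := hy.1; have := hy.2; linarith
    · exact h
  obtain ⟨i, hiN, hyi⟩ := part_cover hN hx (hx0 ▸ hy.1) (hxN ▸ hy.2)
  rw [step_val f x t hx hiN hyi]
  have hti := ht i hiN
  have hxia : a ≤ x i := hx0 ▸ part_le hx (Nat.zero_le i) (le_of_lt hiN)
  have hxib : x (i+1) ≤ b := hxN ▸ part_le hx hiN (le_refl N)
  have hδpos : 0 < δ := lt_of_le_of_lt (by linarith [hx i hiN] : (0:ℝ) ≤ x (i+1) - x i)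
      (hmesh i hiN)
  have hmem : ∀ z ∈ Icc (x i) (x (i+1)), z ∈ EMetric.ball y (ENNReal.ofReal δ) ∩ Icc a b := by
    intro z hz
    refine ⟨?_, le_trans hxia hz.1, le_trans hz.2 hxib⟩
    show edist z y < ENNReal.ofReal δ
    rw [edist_dist]
    refine (ENNReal.ofReal_lt_ofReal_iff hδpos).2 ?_
    rw [Real.dist_eq, abs_sub_lt_iff]
    have h1 := hz.1; have h2 := hz.2; have := hyi.1; have h4 := le_of_lt hyi.2
    constructor <;> [linarith [hmesh i hiN]; linarith [hmesh i hiN]]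
  have hedist : edist (f (t i)) (f y) ≤ ENNReal.ofReal ε₁ := by
    refine le_trans (EMetric.edist_le_diam_of_mem
      (Set.mem_image_of_mem f (hmem _ hti))
      (Set.mem_image_of_mem f (hmem y ⟨hyi.1, le_of_lt hyi.2⟩))) ?_
    exact hδ y ⟨⟨hy.1, le_of_lt hy.2⟩, hyU⟩
  rw [← Real.dist_eq]
  rwa [edist_le_ofReal hε₁] at hedist

noncomputable def unif (a b : ℝ) (n i : ℕ) : ℝ := a + i * ((b-a)/(n+1))


lemma key_two_sums (a b : ℝ) (hab : a < b) (f : ℝ → ℝ) (C : ℝ)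
    (hC : ∀ y ∈ Icc a b, |f y| ≤ C)
    (hnull : volume {x | x ∈ Icc a b ∧ ¬ ContinuousWithinAt f (Icc a b) x} = 0)
    {ε : ℝ} (hε : 0 < ε) :
    ∃ δ > 0, ∀ (N₁ N₂ : ℕ) (x₁ t₁ x₂ t₂ : ℕ → ℝ),
      x₁ 0 = a → x₁ N₁ = b → (∀ i < N₁, x₁ i < x₁ (i+1)) → (∀ i < N₁, x₁ (i+1) - x₁ i < δ) →
      (∀ i < N₁, t₁ i ∈ Icc (x₁ i) (x₁ (i+1))) →
      x₂ 0 = a → x₂ N₂ = b → (∀ i < N₂, x₂ i < x₂ (i+1)) → (∀ i < N₂, x₂ (i+1) - x₂ i < δ) →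
      (∀ i < N₂, t₂ i ∈ Icc (x₂ i) (x₂ (i+1))) →
      |∑ i ∈ Finset.range N₁, f (t₁ i) * (x₁ (i+1) - x₁ i) -
       ∑ i ∈ Finset.range N₂, f (t₂ i) * (x₂ (i+1) - x₂ i)| ≤ ε := by
  have hC0 : 0 ≤ C := le_trans (abs_nonneg _) (hC a ⟨le_refl a, le_of_lt hab⟩)
  have hba : (0:ℝ) < b - a := by linarith
  have hba' : b - a ≠ 0 := ne_of_gt hba
  have hC1 : (0:ℝ) < C + 1 := by linarith
  set ε₁ : ℝ := ε / (4 * (b - a)) with hε₁def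
  set ε' : ℝ := ε / (4 * (C + 1)) with hε'def
  have hε₁ : 0 < ε₁ := div_pos hε (by linarith)
  have hε' : 0 < ε' := div_pos hε (by linarith)
  have hq1 : ε₁ * (4 * (b - a)) = ε := by rw [hε₁def]; field_simp
  have hq2 : ε' * (4 * (C + 1)) = ε := by rw [hε'def]; field_simp
  obtain ⟨U, hUD, hUopen, hU⟩ := Set.exists_isOpen_lt_add
    {x | x ∈ Icc a b ∧ ¬ ContinuousWithinAt f (Icc a b) x}
    (by rw [hnull]; exact ENNReal.zero_ne_top) (ne_of_gt (ENNReal.ofReal_pos.2 hε'))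
  rw [hnull, zero_add] at hU
  have hKcomp : IsCompact (Icc a b \ U) := isCompact_Icc.diff hUopen
  have hosc : ∀ z ∈ Icc a b \ U, oscillationWithin f (Icc a b) z < ENNReal.ofReal ε₁ := by
    intro z hz
    have : ContinuousWithinAt f (Icc a b) z := by
      by_contra h
      exact hz.2 (hUD ⟨hz.1, h⟩)
    rw [this.oscillationWithin_eq_zero]
    exact ENNReal.ofReal_pos.2 hε₁
  obtain ⟨δ, hδ0, hδ⟩ := hKcomp.uniform_oscillationWithin hosc
  refine ⟨δ, hδ0, ?_⟩
  intro N₁ N₂ x₁ t₁ x₂ t₂ h10 h1N h1m h1mesh h1t h20 h2N h2m h2mesh h2t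
  have hval : ∀ {N : ℕ} {x t : ℕ → ℝ}, x 0 = a → x N = b → (∀ i < N, x i < x (i+1)) →
      (∀ i < N, t i ∈ Icc (x i) (x (i+1))) → ∀ y ∈ Ico a b,
      ∃ i, i < N ∧ (∑ j ∈ Finset.range N, Set.indicator (Ico (x j) (x (j+1))) (fun _ => f (t j)) y)
        = f (t i) ∧ t i ∈ Icc a b := by
    intro N x t hx0 hxN hx ht y hy
    have hN : 0 < N := by
      rcases Nat.eq_zero_or_pos N with hc | hc
      · exfalso; rw [hc, hx0] at hxN; have := hy.1; have := hy.2; linarith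
      · exact hc
    obtain ⟨i, hiN, hyi⟩ := part_cover hN hx (hx0 ▸ hy.1) (hxN ▸ hy.2)
    have hti := ht i hiN
    have hm : t i ∈ Icc a b :=
      ⟨le_trans (hx0 ▸ part_le hx (Nat.zero_le i) (le_of_lt hiN)) hti.1,
       le_trans hti.2 (hxN ▸ part_le hx hiN (le_refl N))⟩
    exact ⟨i, hiN, step_val f x t hx hiN hyi, hm⟩
  set g₁ : ℝ → ℝ := fun y => ∑ j ∈ Finset.range N₁,
      Set.indicator (Ico (x₁ j) (x₁ (j+1))) (fun _ => f (t₁ j)) y with hg₁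
  set g₂ : ℝ → ℝ := fun y => ∑ j ∈ Finset.range N₂,
      Set.indicator (Ico (x₂ j) (x₂ (j+1))) (fun _ => f (t₂ j)) y with hg₂
  set h : ℝ → ℝ := fun y => Set.indicator (Ico a b) (fun _ => 2*ε₁) y
      + Set.indicator (U ∩ Ico a b) (fun _ => 2*C) y with hh
  have hpt : ∀ y, |g₁ y - g₂ y| ≤ h y := by
    intro y
    show |g₁ y - g₂ y| ≤ Set.indicator (Ico a b) (fun _ => 2*ε₁) y
      + Set.indicator (U ∩ Ico a b) (fun _ => 2*C) y
    by_cases hy : y ∈ Ico a b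
    · by_cases hyU : y ∈ U
      · obtain ⟨i, hiN, hgv, hti⟩ := hval h10 h1N h1m h1t y hy
        obtain ⟨j, hjN, hgv2, htj⟩ := hval h20 h2N h2m h2t y hy
        have e1 : g₁ y = f (t₁ i) := hgv
        have e2 : g₂ y = f (t₂ j) := hgv2
        rw [Set.indicator_of_mem hy, Set.indicator_of_mem (Set.mem_inter hyU hy), e1, e2]
        have a1 := hC _ hti
        have a2 := hC _ htj
        calc |f (t₁ i) - f (t₂ j)| ≤ |f (t₁ i)| + |f (t₂ j)| := abs_sub _ _
          _ ≤ 2*ε₁ + 2*C := by linarith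
      · have h1 := step_pointwise (le_of_lt hε₁) hδ h10 h1N h1m h1mesh h1t hy hyU
        have h2 := step_pointwise (le_of_lt hε₁) hδ h20 h2N h2m h2mesh h2t hy hyU
        have h1' : |g₁ y - f y| ≤ ε₁ := h1
        have h2' : |g₂ y - f y| ≤ ε₁ := h2
        rw [Set.indicator_of_mem hy, Set.indicator_of_notMem (fun hc => hyU hc.1), add_zero]
        calc |g₁ y - g₂ y| ≤ |g₁ y - f y| + |f y - g₂ y| := abs_sub_le _ _ _
          _ = |g₁ y - f y| + |g₂ y - f y| := by rw [abs_sub_comm (f y) (g₂ y)]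
          _ ≤ 2*ε₁ := by linarith
    · have hz : ∀ {N : ℕ} {x t : ℕ → ℝ}, x 0 = a → x N = b → (∀ i < N, x i < x (i+1)) →
          (∑ j ∈ Finset.range N, Set.indicator (Ico (x j) (x (j+1))) (fun _ => f (t j)) y) = 0 := by
        intro N x t hx0 hxN hx
        apply Finset.sum_eq_zero
        intro j hj
        apply Set.indicator_of_notMem
        intro hyj
        apply hy
        have hjN := Finset.mem_range.1 hj
        exact ⟨le_trans (hx0 ▸ part_le hx (Nat.zero_le j) (le_of_lt hjN)) hyj.1,
          lt_of_lt_of_le hyj.2 (hxN ▸ part_le hx hjN (le_refl N))⟩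
      have e1 : g₁ y = 0 := hz h10 h1N h1m
      have e2 : g₂ y = 0 := hz h20 h2N h2m
      rw [e1, e2, sub_zero, abs_zero]
      have p1 : (0:ℝ) ≤ Set.indicator (Ico a b) (fun _ => 2*ε₁) y :=
        Set.indicator_nonneg (fun _ _ => by linarith) y
      have p2 : (0:ℝ) ≤ Set.indicator (U ∩ Ico a b) (fun _ => 2*C) y :=
        Set.indicator_nonneg (fun _ _ => by linarith) y
      linarith
  have hUmeas : MeasurableSet (U ∩ Ico a b) := hUopen.measurableSet.inter measurableSet_Ico
  have hUvol : volume (U ∩ Ico a b) < ⊤ :=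
    lt_of_le_of_lt (measure_mono Set.inter_subset_left) (lt_trans hU ENNReal.ofReal_lt_top)
  have i1int : Integrable (fun y => Set.indicator (Ico a b) (fun _ => 2*ε₁) y) :=
    (integrable_indicator_iff measurableSet_Ico).2
      (integrableOn_const (by simp [Real.volume_Ico]))
  have i2int : Integrable (fun y => Set.indicator (U ∩ Ico a b) (fun _ => 2*C) y) :=
    (integrable_indicator_iff hUmeas).2 (integrableOn_const hUvol.ne)
  have hint : Integrable h := i1int.add i2int
  have i1 : ∫ y, Set.indicator (Ico a b) (fun _ => 2*ε₁) y = (b-a) * (2*ε₁) := by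
    rw [MeasureTheory.integral_indicator_const _ measurableSet_Ico,
      Real.volume_real_Ico_of_le (by linarith : a ≤ b), smul_eq_mul]
  have i2 : ∫ y, Set.indicator (U ∩ Ico a b) (fun _ => 2*C) y
      = (volume (U ∩ Ico a b)).toReal * (2*C) := by
    rw [MeasureTheory.integral_indicator_const _ hUmeas, smul_eq_mul, measureReal_def]
  rw [← step_integral f x₁ t₁ h1m, ← step_integral f x₂ t₂ h2m,
    ← MeasureTheory.integral_sub (step_integrable f x₁ t₁) (step_integrable f x₂ t₂)]
  have habs : |∫ y, (g₁ y - g₂ y)| ≤ ∫ y, h y := by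
    rw [← Real.norm_eq_abs]
    refine le_trans (norm_integral_le_integral_norm _) ?_
    refine le_trans (le_of_eq ?_) (MeasureTheory.integral_mono
      ((step_integrable f x₁ t₁).sub (step_integrable f x₂ t₂)).abs hint hpt)
    simp [Real.norm_eq_abs]
    rfl
  refine le_trans habs ?_
  have hih : ∫ y, h y = (b-a) * (2*ε₁) + (volume (U ∩ Ico a b)).toReal * (2*C) := by
    rw [hh]
    rw [MeasureTheory.integral_add i1int i2int, i1, i2]
  rw [hih]
  have h2 : (volume (U ∩ Ico a b)).toReal ≤ ε' := by
    apply ENNReal.toReal_le_of_le_ofReal (le_of_lt hε')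
    exact le_of_lt (lt_of_le_of_lt (measure_mono Set.inter_subset_left) hU)
  have hA : (b-a) * (2*ε₁) = ε/2 := by linear_combination hq1 / 2
  have hB : (volume (U ∩ Ico a b)).toReal * (2*C) ≤ ε/2 := by nlinarith [hq2, hε'.le, hC0, h2]
  linarith

lemma exists_integral (a b : ℝ) (hab : a < b) (f : ℝ → ℝ) (C : ℝ)
    (hC : ∀ y ∈ Icc a b, |f y| ≤ C)
    (hnull : volume {x | x ∈ Icc a b ∧ ¬ ContinuousWithinAt f (Icc a b) x} = 0) :
    ∃ I : ℝ, RiemannIntegralOn f a b I := by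
  have hba : (0:ℝ) < b - a := by linarith
  -- uniform partitions
  have hxs : ∀ n i : ℕ, unif a b n i = a + i * ((b-a)/(n+1)) := fun n i => rfl
  set xs : ℕ → ℕ → ℝ := unif a b
  have ux0 : ∀ n, xs n 0 = a := by intro n; rw [show xs n 0 = unif a b n 0 from rfl, unif]; simp
  have uxN : ∀ n : ℕ, xs n (n+1) = b := by
    intro n
    have hn1 : ((n:ℝ)+1) ≠ 0 := by positivity
    rw [show xs n (n+1) = unif a b n (n+1) from rfl, unif]; push_cast; field_simp; ring
  have ud : ∀ n i : ℕ, xs n (i+1) - xs n i = (b-a)/(n+1) := by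
    intro n i; rw [hxs, hxs]; push_cast; ring
  have udpos : ∀ n : ℕ, (0:ℝ) < (b-a)/(n+1) := by
    intro n; positivity
  have umono : ∀ n : ℕ, ∀ i < n+1, xs n i < xs n (i+1) := by
    intro n i _; have h1 := udpos n; have h2 := ud n i; linarith
  have utag : ∀ n : ℕ, ∀ i < n+1, xs n i ∈ Icc (xs n i) (xs n (i+1)) := by
    intro n i hi; exact ⟨le_refl _, le_of_lt (umono n i hi)⟩
  set S : ℕ → ℝ := fun n => ∑ i ∈ Finset.range (n+1), f (xs n i) * (xs n (i+1) - xs n i)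
    with hS
  have hmesh : ∀ {δ : ℝ}, 0 < δ → ∃ M : ℕ, ∀ n ≥ M, ∀ i < n+1, xs n (i+1) - xs n i < δ := by
    intro δ hδ
    obtain ⟨M, hM⟩ := exists_nat_gt ((b-a)/δ)
    refine ⟨M, fun n hn i _ => ?_⟩
    rw [ud]
    rw [div_lt_iff₀ (by positivity)]
    have h1 : (b-a)/δ < (n:ℝ)+1 := lt_of_lt_of_le hM (by exact_mod_cast Nat.le_succ_of_le hn)
    rw [div_lt_iff₀ hδ] at h1
    linarith
  have hcauchy : CauchySeq S := by
    rw [Metric.cauchySeq_iff]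
    intro ε hε
    obtain ⟨δ, hδ0, hkey⟩ := key_two_sums a b hab f C hC hnull (half_pos hε)
    obtain ⟨M, hM⟩ := hmesh hδ0
    refine ⟨M, fun m hm n hn => ?_⟩
    rw [Real.dist_eq]
    calc |S m - S n| ≤ ε/2 := hkey (m+1) (n+1) (xs m) (xs m) (xs n) (xs n)
          (ux0 m) (uxN m) (umono m) (hM m hm) (utag m)
          (ux0 n) (uxN n) (umono n) (hM n hn) (utag n)
      _ < ε := half_lt_self hε
  obtain ⟨I, hI⟩ := cauchySeq_tendsto_of_complete hcauchy
  refine ⟨I, ?_⟩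
  intro ε hε
  obtain ⟨δ, hδ0, hkey⟩ := key_two_sums a b hab f C hC hnull (div_pos hε (by norm_num : (0:ℝ) < 3))
  refine ⟨δ, hδ0, ?_⟩
  intro N x t hx0 hxN hm hmesh' ht
  obtain ⟨M, hM⟩ := hmesh hδ0
  have hclose : ∀ n ≥ M, |(∑ i ∈ Finset.range N, f (t i) * (x (i+1) - x i)) - S n| ≤ ε/3 :=
    fun n hn => hkey N (n+1) x t (xs n) (xs n) hx0 hxN hm hmesh' ht
      (ux0 n) (uxN n) (umono n) (hM n hn) (utag n)
  have hlim : Filter.Tendsto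
      (fun n => |(∑ i ∈ Finset.range N, f (t i) * (x (i+1) - x i)) - S n|) Filter.atTop
      (nhds |(∑ i ∈ Finset.range N, f (t i) * (x (i+1) - x i)) - I|) :=
    ((tendsto_const_nhds.sub hI).abs)
  have : |(∑ i ∈ Finset.range N, f (t i) * (x (i+1) - x i)) - I| ≤ ε/3 :=
    le_of_tendsto hlim (Filter.eventually_atTop.2 ⟨M, hclose⟩)
  linarith

lemma osc_null (a b : ℝ) (hab : a < b) (f : ℝ → ℝ) (I : ℝ)
    (hI : RiemannIntegralOn f a b I) {c : ℝ} (hc : 0 < c) :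
    volume {z | z ∈ Icc a b ∧ ENNReal.ofReal c ≤ oscillationWithin f (Icc a b) z} = 0 := by
  classical
  have hba : (0:ℝ) < b - a := by linarith
  set Dc := {z | z ∈ Icc a b ∧ ENNReal.ofReal c ≤ oscillationWithin f (Icc a b) z} with hDc
  suffices H : ∀ ε : ℝ, 0 < ε → volume Dc ≤ ENNReal.ofReal ε by
    refine le_antisymm ?_ (by simp)
    refine ENNReal.le_of_forall_pos_le_add fun ε hε _ => ?_
    rw [zero_add]
    exact le_trans (H ε (by exact_mod_cast hε)) (by rw [ENNReal.ofReal_coe_nnreal])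
  intro ε hε
  obtain ⟨δ, hδ0, hsum⟩ := hI (c*ε/8) (by positivity)
  -- uniform partition with mesh < δ
  obtain ⟨M, hM⟩ := exists_nat_gt ((b-a)/δ)
  set N := M + 1 with hN
  set xv : ℕ → ℝ := unif a b M with hxv
  have hud : ∀ i : ℕ, xv (i+1) - xv i = (b-a)/(M+1) := by
    intro i; rw [hxv]; show unif a b M (i+1) - unif a b M i = _; rw [unif, unif]; push_cast; ring
  have hudpos : (0:ℝ) < (b-a)/(M+1) := by positivity
  have hx0 : xv 0 = a := by rw [hxv]; show unif a b M 0 = a; rw [unif]; simp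
  have hxN : xv N = b := by
    rw [hxv, hN]; show unif a b M (M+1) = b; rw [unif]; push_cast; field_simp; ring
  have hmono : ∀ i < N, xv i < xv (i+1) := by
    intro i _; have := hud i; linarith
  have hmesh : ∀ i < N, xv (i+1) - xv i < δ := by
    intro i _
    rw [hud]
    rw [div_lt_iff₀ (by positivity)]
    have h1 : (b-a)/δ < (M:ℝ)+1 := lt_of_lt_of_le hM (by push_cast; linarith)
    rw [div_lt_iff₀ (by positivity : (0:ℝ) < δ)] at h1
    linarith
  -- choose pairs of tags with a large gap on intervals meeting Dc
  have hch : ∀ i : ℕ, ∃ u v : ℝ, u ∈ Icc (xv i) (xv (i+1)) ∧ v ∈ Icc (xv i) (xv (i+1)) ∧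
      f v ≤ f u ∧ ((∃ z ∈ Ioo (xv i) (xv (i+1)), z ∈ Dc) → c/2 < f u - f v) := by
    intro i
    have hii : xv i < xv (i+1) := by have := hud i; linarith
    by_cases hex : ∃ z ∈ Ioo (xv i) (xv (i+1)), z ∈ Dc
    · obtain ⟨z, hzIoo, hzD⟩ := hex
      have hV : Ioo (xv i) (xv (i+1)) ∩ Icc a b ∈ nhdsWithin z (Icc a b) :=
        Filter.inter_mem (mem_nhdsWithin_of_mem_nhds (isOpen_Ioo.mem_nhds hzIoo))
          self_mem_nhdsWithin
      have hle : oscillationWithin f (Icc a b) z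
          ≤ EMetric.diam (f '' (Ioo (xv i) (xv (i+1)) ∩ Icc a b)) :=
        biInf_le EMetric.diam (Filter.image_mem_map hV)
      have hdiam : ¬ EMetric.diam (f '' (Ioo (xv i) (xv (i+1)) ∩ Icc a b))
          ≤ ENNReal.ofReal (c/2) := by
        intro hcon
        have h1 := le_trans (le_trans hzD.2 hle) hcon
        rw [ENNReal.ofReal_le_ofReal_iff (by linarith)] at h1
        linarith
      rw [EMetric.diam, EMetric.diam_le_iff] at hdiam
      push_neg at hdiam
      obtain ⟨p', hp', q', hq', hpq⟩ := hdiam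
      obtain ⟨p, hp, rfl⟩ := hp'
      obtain ⟨q, hq, rfl⟩ := hq'
      rw [edist_dist] at hpq
      have hgap : c/2 < dist (f p) (f q) := by
        rw [← ENNReal.ofReal_lt_ofReal_iff_of_nonneg (by linarith : (0:ℝ) ≤ c/2)]
        exact hpq
      rw [Real.dist_eq] at hgap
      have hpI : p ∈ Icc (xv i) (xv (i+1)) := ⟨le_of_lt hp.1.1, le_of_lt hp.1.2⟩
      have hqI : q ∈ Icc (xv i) (xv (i+1)) := ⟨le_of_lt hq.1.1, le_of_lt hq.1.2⟩
      rcases le_total (f q) (f p) with ho | ho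
      · exact ⟨p, q, hpI, hqI, ho, fun _ => by rw [abs_of_nonneg (by linarith)] at hgap; linarith⟩
      · refine ⟨q, p, hqI, hpI, ho, fun _ => ?_⟩
        rw [abs_of_nonpos (by linarith)] at hgap; linarith
    · exact ⟨xv i, xv i, ⟨le_refl _, le_of_lt hii⟩, ⟨le_refl _, le_of_lt hii⟩, le_refl _,
        fun h => absurd h hex⟩
  choose u v hu hv huv hgap using hch
  have hSu := hsum N xv u hx0 hxN hmono hmesh (fun i _ => hu i)
  have hSv := hsum N xv v hx0 hxN hmono hmesh (fun i _ => hv i)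
  set T : Finset ℕ := (Finset.range N).filter (fun i => ∃ z ∈ Ioo (xv i) (xv (i+1)), z ∈ Dc)
    with hT
  -- sum bound
  have hsumdiff : ∑ i ∈ Finset.range N, (f (u i) - f (v i)) * (xv (i+1) - xv i) < 2*(c*ε/8) := by
    have e : ∑ i ∈ Finset.range N, (f (u i) - f (v i)) * (xv (i+1) - xv i)
        = (∑ i ∈ Finset.range N, f (u i) * (xv (i+1) - xv i))
          - ∑ i ∈ Finset.range N, f (v i) * (xv (i+1) - xv i) := by
      rw [← Finset.sum_sub_distrib]
      exact Finset.sum_congr rfl fun i _ => by ring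
    rw [e]
    rw [abs_lt] at hSu hSv
    linarith [hSu.1, hSu.2, hSv.1, hSv.2]
  have hTbound : (c/2) * (∑ i ∈ T, (xv (i+1) - xv i))
      ≤ ∑ i ∈ Finset.range N, (f (u i) - f (v i)) * (xv (i+1) - xv i) := by
    rw [Finset.mul_sum]
    refine le_trans (Finset.sum_le_sum ?_) (Finset.sum_le_sum_of_subset_of_nonneg
      (Finset.filter_subset _ _) ?_)
    · intro i hi
      have hiT := Finset.mem_filter.1 hi
      have hgapi := hgap i hiT.2
      have hΔ : (0:ℝ) ≤ xv (i+1) - xv i := by have := hud i; linarith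
      exact mul_le_mul_of_nonneg_right (le_of_lt hgapi) hΔ
    · intro i _ _
      have hΔ : (0:ℝ) ≤ xv (i+1) - xv i := by have := hud i; linarith
      exact mul_nonneg (by linarith [huv i]) hΔ
  have hTlen : ∑ i ∈ T, (xv (i+1) - xv i) ≤ ε/2 := by
    nlinarith [hTbound, hsumdiff, hc]
  -- covering
  have hcover : Dc ⊆ (⋃ i ∈ T, Icc (xv i) (xv (i+1))) ∪ (⋃ i ∈ Finset.range (N+1), {xv i}) := by
    intro z hz
    by_cases hpt : ∃ i ∈ Finset.range (N+1), z = xv i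
    · obtain ⟨i, hi, rfl⟩ := hpt
      exact Or.inr (Set.mem_biUnion hi rfl)
    · push_neg at hpt
      have hza : a ≤ z := hz.1.1
      have hzb : z < b := by
        rcases lt_or_eq_of_le hz.1.2 with h | h
        · exact h
        · exact absurd (h.trans hxN.symm) (hpt N (Finset.mem_range.2 (Nat.lt_succ_self N)))
      obtain ⟨i, hiN, hyi⟩ := part_cover (by omega : 0 < N) hmono (hx0 ▸ hza) (hxN ▸ hzb)
      have hne : z ≠ xv i := hpt i (Finset.mem_range.2 (by omega))
      have hzIoo : z ∈ Ioo (xv i) (xv (i+1)) := ⟨lt_of_le_of_ne hyi.1 (Ne.symm hne), hyi.2⟩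
      have hiT : i ∈ T := Finset.mem_filter.2 ⟨Finset.mem_range.2 hiN, ⟨z, hzIoo, hz⟩⟩
      exact Or.inl (Set.mem_biUnion hiT ⟨le_of_lt hzIoo.1, le_of_lt hzIoo.2⟩)
  calc volume Dc ≤ volume ((⋃ i ∈ T, Icc (xv i) (xv (i+1)))
        ∪ (⋃ i ∈ Finset.range (N+1), {xv i})) := measure_mono hcover
    _ ≤ volume (⋃ i ∈ T, Icc (xv i) (xv (i+1)))
        + volume (⋃ i ∈ Finset.range (N+1), ({xv i} : Set ℝ)) := measure_union_le _ _
    _ ≤ (∑ i ∈ T, volume (Icc (xv i) (xv (i+1)))) + 0 := by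
        have hz : volume (⋃ i ∈ Finset.range (N+1), ({xv i} : Set ℝ)) = 0 := by
          refine le_antisymm (le_trans (measure_biUnion_finset_le _ _) ?_) (by simp)
          simp [Real.volume_singleton]
        exact add_le_add (measure_biUnion_finset_le _ _) (le_of_eq hz)
    _ = ∑ i ∈ T, ENNReal.ofReal (xv (i+1) - xv i) := by
        rw [add_zero]
        exact Finset.sum_congr rfl fun i _ => Real.volume_Icc
    _ = ENNReal.ofReal (∑ i ∈ T, (xv (i+1) - xv i)) := by
        rw [ENNReal.ofReal_sum_of_nonneg]
        intro i _
        have := hud i; linarith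
    _ ≤ ENNReal.ofReal ε := ENNReal.ofReal_le_ofReal (by linarith)

lemma null_of_integrable (a b : ℝ) (hab : a < b) (f : ℝ → ℝ) (I : ℝ)
    (hI : RiemannIntegralOn f a b I) :
    volume {x | x ∈ Icc a b ∧ ¬ ContinuousWithinAt f (Icc a b) x} = 0 := by
  have hsub : {x | x ∈ Icc a b ∧ ¬ ContinuousWithinAt f (Icc a b) x}
      ⊆ ⋃ n : ℕ, {z | z ∈ Icc a b ∧ ENNReal.ofReal (1/(n+1))
          ≤ oscillationWithin f (Icc a b) z} := by
    intro z hz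
    have hosc : oscillationWithin f (Icc a b) z ≠ 0 := by
      intro h0
      exact hz.2 ((OscillationWithin.eq_zero_iff_continuousWithinAt f hz.1).1 h0)
    rw [Set.mem_iUnion]
    by_contra hcon
    push_neg at hcon
    have hlt : ∀ n : ℕ, oscillationWithin f (Icc a b) z < ENNReal.ofReal (1/(n+1)) := by
      intro n
      have := hcon n
      simp only [Set.mem_setOf_eq, not_and, not_le] at this
      exact this hz.1
    have hne_top : oscillationWithin f (Icc a b) z ≠ ⊤ :=
      ne_top_of_lt (lt_of_lt_of_le (hlt 0) le_top)
    have ht0 : 0 < (oscillationWithin f (Icc a b) z).toReal :=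
      ENNReal.toReal_pos hosc hne_top
    set t := (oscillationWithin f (Icc a b) z).toReal with htdef
    obtain ⟨n, hn⟩ := exists_nat_gt (1/t)
    have h1 : (1:ℝ)/(n+1) < t := by
      rw [div_lt_iff₀ (by positivity)]
      rw [div_lt_iff₀ ht0] at hn
      have : (n:ℝ) ≤ (n:ℝ)+1 := by linarith
      nlinarith
    have h2 : ENNReal.ofReal (1/(n+1)) ≤ oscillationWithin f (Icc a b) z := by
      rw [← ENNReal.ofReal_toReal hne_top]
      exact ENNReal.ofReal_le_ofReal (le_of_lt h1)
    exact absurd (lt_of_le_of_lt h2 (hlt n)) (lt_irrefl _)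
  refine le_antisymm ?_ (by simp)
  refine le_trans (measure_mono hsub) ?_
  refine le_trans (measure_iUnion_le _) ?_
  have : ∀ n : ℕ, volume {z | z ∈ Icc a b ∧ ENNReal.ofReal (1/(n+1))
      ≤ oscillationWithin f (Icc a b) z} = 0 :=
    fun n => osc_null a b hab f I hI (by positivity)
  refine le_of_eq (by simp only [ENNReal.tsum_eq_zero]; intro n; exact this n)


/-- Vitali–Lebesgue theorem: a bounded function on `[a,b]` is Riemann integrable iff
its set of points of discontinuity (within `[a,b]`) is a Lebesgue null set. -/
theorem riemannIntegrable_iff_ae_continuous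
    (a b : ℝ) (hab : a < b) (f : ℝ → ℝ)
    (hb : Bornology.IsBounded (f '' Icc a b)) :
    (∃ I : ℝ, RiemannIntegralOn f a b I) ↔
      volume {x | x ∈ Icc a b ∧ ¬ ContinuousWithinAt f (Icc a b) x} = 0 := by
  constructor
  · rintro ⟨I, hI⟩
    exact null_of_integrable a b hab f I hI
  · intro hnull
    obtain ⟨C, hC⟩ := isBounded_iff_forall_norm_le.1 hb
    refine exists_integral a b hab f C (fun y hy => ?_) hnull
    rw [← Real.norm_eq_abs]
    exact hC (f y) (Set.mem_image_of_mem f hy)
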